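/- Let f: ℂ^N → ℝ be defined by f(u) = ln det(T(u) + εI) + g(u) where g is any function, and suppose at each iteration u_{j+1} minimizes u ↦ tr((T(u_j)+εI)⁻¹ T(u)) + g(u) over a feasible set containing u_j. Then f(u_{j+1}) ≤ f(u_j), i.e., the objective is non-increasing along the iterates. -/

import Mathlib

open Matrix ComplexOrder

/-- The Hermitian Toeplitz matrix whose first row is the transpose of `u`. -/
def Toep (N : ℕ) (u : Fin N → ℂ) : Matrix (Fin N) (Fin N) ℂ :=
  Matrix.of fun j k =>
    if (j : ℕ) ≤ (k : ℕ) then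
      u ⟨(k : ℕ) - (j : ℕ), lt_of_le_of_lt (Nat.sub_le _ _) k.isLt⟩
    else
      (starRingEnd ℂ) (u ⟨(j : ℕ) - (k : ℕ), lt_of_le_of_lt (Nat.sub_le _ _) j.isLt⟩)

variable {n : Type*} [Fintype n] [DecidableEq n]

lemma trace_eq_sum_eig {A : Matrix n n ℂ} (hA : A.IsHermitian) :
    A.trace = ∑ i, (hA.eigenvalues i : ℂ) := by
  conv_lhs => rw [hA.spectral_theorem, Unitary.conjStarAlgAut_apply]
  rw [Matrix.trace_mul_comm, ← Matrix.mul_assoc]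
  have h1 : (star hA.eigenvectorUnitary : Matrix n n ℂ) * (hA.eigenvectorUnitary : Matrix n n ℂ) = 1 := by
    simp
  rw [h1, Matrix.one_mul, Matrix.trace_diagonal]
  simp

lemma det_re_pos {A : Matrix n n ℂ} (hA : A.PosDef) :
    0 < A.det.re ∧ A.det.im = 0 := by
  have := hA.det_pos
  rw [Complex.lt_def] at this
  exact ⟨by simpa using this.1, by simpa using this.2.symm⟩

/-- Conjugation by an invertible Hermitian matrix preserves positive definiteness. -/
lemma posdef_conj {A S : Matrix n n ℂ} (hA : A.PosDef) (hS : S.IsHermitian)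
    (hSu : IsUnit S.det) : (S * A * S).PosDef := by
  have h1 : (S * A * S).IsHermitian := by
    have : S * A * S = S * A * Sᴴ := by rw [hS.eq]
    rw [this]
    exact Matrix.isHermitian_mul_mul_conjTranspose _ hA.1
  refine PosDef.of_dotProduct_mulVec_pos h1 (fun x hx => ?_)
  have hmv : S *ᵥ x ≠ 0 := by
    intro h
    apply hx
    have := congrArg (S⁻¹ *ᵥ ·) h
    simpa [Matrix.mulVec_mulVec, Matrix.nonsing_inv_mul S hSu] using this
  have key := hA.dotProduct_mulVec_pos hmv
  rw [show star (S *ᵥ x) = star x ᵥ* S by rw [Matrix.star_mulVec, hS.eq]] at key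
  have heq : star x ⬝ᵥ (S * A * S) *ᵥ x = (star x ᵥ* S) ⬝ᵥ A *ᵥ (S *ᵥ x) := by
    rw [Matrix.mul_assoc, ← Matrix.mulVec_mulVec, ← Matrix.mulVec_mulVec,
      Matrix.dotProduct_mulVec]
  rw [heq]
  exact key

open scoped MatrixOrder in
/-- Key tangent-plane inequality: for positive definite Hermitian `A, B`,
`log det B ≤ log det A + Re tr(A⁻¹ B) - n`. -/
lemma logdet_tangent {A B : Matrix n n ℂ} (hA : A.PosDef) (hB : B.PosDef) :
    Real.log B.det.re ≤ Real.log A.det.re + ((A⁻¹ * B).trace).re - Fintype.card n := by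
  classical
  set S := CFC.sqrt A with hSdef
  have hSps : S.PosSemidef := (CFC.sqrt_nonneg A).posSemidef
  have hSS : S * S = A := CFC.sqrt_mul_sqrt_self A hA.posSemidef.nonneg
  have hSu : IsUnit S.det := by
    have : S.det * S.det = A.det := by rw [← Matrix.det_mul, hSS]
    have hAd : A.det ≠ 0 := hA.det_pos.ne'
    exact isUnit_iff_ne_zero.mpr fun h => hAd (by rw [← this, h, mul_zero])
  have hSiH : (S⁻¹).IsHermitian := hSps.1.inv
  have hSiu : IsUnit (S⁻¹).det := S.isUnit_nonsing_inv_det hSu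
  set C := S⁻¹ * B * S⁻¹ with hCdef
  have hC : C.PosDef := posdef_conj hB hSiH hSiu
  -- eigenvalues of C
  have hdetC : C.det = ∏ i, (hC.1.eigenvalues i : ℂ) := hC.1.det_eq_prod_eigenvalues
  have htrC : C.trace = ∑ i, (hC.1.eigenvalues i : ℂ) := trace_eq_sum_eig hC.1
  -- trace C = trace (A⁻¹ * B)
  have hAinv : A⁻¹ = S⁻¹ * S⁻¹ := by rw [← hSS, Matrix.mul_inv_rev]
  have htr : C.trace = (A⁻¹ * B).trace := by
    rw [hCdef, Matrix.trace_mul_comm, ← Matrix.mul_assoc, hAinv]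
  -- det C = det B / det A
  have hdet : C.det = B.det / A.det := by
    rw [hCdef, Matrix.det_mul, Matrix.det_mul, Matrix.det_nonsing_inv, ← hSS, Matrix.det_mul]
    simp only [Ring.inverse_eq_inv]
    ring
  obtain ⟨hAre, hAim⟩ := det_re_pos hA
  obtain ⟨hBre, hBim⟩ := det_re_pos hB
  obtain ⟨hCre, hCim⟩ := det_re_pos hC
  -- real versions
  have hdetCre : C.det.re = ∏ i, hC.1.eigenvalues i := by
    rw [hdetC, ← Complex.ofReal_prod, Complex.ofReal_re]
  have htrCre : C.trace.re = ∑ i, hC.1.eigenvalues i := by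
    rw [htrC, ← Complex.ofReal_sum, Complex.ofReal_re]
  -- log det C ≤ tr C - n
  have hlog : Real.log C.det.re ≤ C.trace.re - Fintype.card n := by
    rw [hdetCre, htrCre, Real.log_prod (fun i _ => (hC.eigenvalues_pos i).ne')]
    have : ∀ i ∈ Finset.univ, Real.log (hC.1.eigenvalues i) ≤ hC.1.eigenvalues i - 1 :=
      fun i _ => Real.log_le_sub_one_of_pos (hC.eigenvalues_pos i)
    calc ∑ i, Real.log (hC.1.eigenvalues i) ≤ ∑ i, (hC.1.eigenvalues i - 1) :=
          Finset.sum_le_sum this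
      _ = (∑ i, hC.1.eigenvalues i) - Fintype.card n := by
          rw [Finset.sum_sub_distrib]
          simp [Finset.card_univ]
  -- C.det.re = B.det.re / A.det.re
  have hAd : A.det = (A.det.re : ℂ) := Complex.ext rfl (by simp [hAim])
  have hCreq : C.det.re = B.det.re / A.det.re := by
    rw [hdet, hAd, Complex.div_ofReal_re]; simp
  have hlogC : Real.log C.det.re = Real.log B.det.re - Real.log A.det.re := by
    rw [hCreq, Real.log_div hBre.ne' hAre.ne']
  rw [hlogC, htr] at hlog
  linarith

theorem mm_iterates_monotone (N : ℕ) (ε : ℝ) (hε : 0 < ε)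
    (g : (Fin N → ℂ) → ℝ) (D : Set (Fin N → ℂ)) (u : ℕ → (Fin N → ℂ))
    (hmem : ∀ j, u j ∈ D)
    (hpd : ∀ j, (Toep N (u j) + ε • (1 : Matrix (Fin N) (Fin N) ℂ)).PosDef)
    (hmin : ∀ j, ∀ v ∈ D,
      ((Toep N (u j) + ε • (1 : Matrix (Fin N) (Fin N) ℂ))⁻¹
          * Toep N (u (j+1))).trace.re + g (u (j+1))
        ≤ ((Toep N (u j) + ε • (1 : Matrix (Fin N) (Fin N) ℂ))⁻¹
          * Toep N v).trace.re + g v) :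
    ∀ j,
      Real.log ((Toep N (u (j+1)) + ε • (1 : Matrix (Fin N) (Fin N) ℂ)).det.re)
          + g (u (j+1))
        ≤ Real.log ((Toep N (u j) + ε • (1 : Matrix (Fin N) (Fin N) ℂ)).det.re)
          + g (u j) := by
  intro j
  have hA := hpd j
  have hB := hpd (j+1)
  set T1 := Toep N (u j) with hT1
  set T2 := Toep N (u (j+1)) with hT2
  set E : Matrix (Fin N) (Fin N) ℂ := ε • (1 : Matrix (Fin N) (Fin N) ℂ) with hE
  have key := logdet_tangent hA hB
  rw [Fintype.card_fin] at key
  have h1 : ((T1+E)⁻¹ * (T2+E)).trace.re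
      = ((T1+E)⁻¹ * T2).trace.re + ((T1+E)⁻¹ * E).trace.re := by
    rw [Matrix.mul_add, Matrix.trace_add, Complex.add_re]
  have h2 : ((T1+E)⁻¹ * T1).trace.re + ((T1+E)⁻¹ * E).trace.re = (N : ℝ) := by
    rw [← Complex.add_re, ← Matrix.trace_add, ← Matrix.mul_add,
      Matrix.nonsing_inv_mul _ hA.det_pos.ne'.isUnit, Matrix.trace_one]
    simp
  have hm := hmin j (u j) (hmem j)
  linarith
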